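/- If V ∈ C¹(ℝⁿ,ℝⁿ) is Lipschitz continuous and bounded, and its Jacobian ∂V is Lipschitz continuous, then V satisfies condition (H). -/

import Mathlib

noncomputable section

/-- Euclidean space ℝⁿ. -/
abbrev Vec (n : ℕ) : Type := EuclideanSpace ℝ (Fin n)

/-- Condition (H) on a vector field `V`. -/
def CondH {n : ℕ} (V : Vec n → Vec n) : Prop :=
  ∃ C : ℝ, 0 < C ∧ ∀ (θ : ℝ) (x y z w : Vec n),
    ‖V (x + θ • V z) + V y - V x - V (y + θ • V w)‖ ≤
      C * |θ| * (‖x - y‖ + (1 + |θ|) * ‖z - w‖)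

lemma key_increment {n : ℕ} (V : Vec n → Vec n) (hC1 : ContDiff ℝ 1 V) (L' : NNReal)
    (hJ : LipschitzWith L' (fun x => fderiv ℝ V x)) (h a b : Vec n) :
    ‖(V (a + h) - V a) - (V (b + h) - V b)‖ ≤ (L' : ℝ) * ‖h‖ * ‖a - b‖ := by
  have hd : ∀ x, HasFDerivAt V (fderiv ℝ V x) x := fun x =>
    (hC1.differentiable one_ne_zero x).hasFDerivAt
  have hF : ∀ x : Vec n, HasFDerivAt (fun x => V (x + h) - V x)
      (fderiv ℝ V (x + h) - fderiv ℝ V x) x := by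
    intro x
    have h1 : HasFDerivAt (fun x : Vec n => V (x + h)) (fderiv ℝ V (x + h)) x := by
      have := (hd (x + h)).comp x ((hasFDerivAt_id x).add_const h)
      simp at this; exact this
    exact h1.sub (hd x)
  have hb : ∀ x ∈ (Set.univ : Set (Vec n)),
      ‖fderiv ℝ V (x + h) - fderiv ℝ V x‖ ≤ (L' : ℝ) * ‖h‖ := by
    intro x _
    have := hJ.dist_le_mul (x + h) x
    rw [dist_eq_norm, dist_eq_norm] at this
    rw [add_sub_cancel_left] at this
    exact this
  have := convex_univ.norm_image_sub_le_of_norm_hasFDerivWithin_le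
    (fun x _ => (hF x).hasFDerivWithinAt) hb (Set.mem_univ b) (Set.mem_univ a)
  simpa using this

/-- a bounded Lipschitz `C¹` vector field whose Jacobian is
Lipschitz satisfies condition (H). -/
theorem c1_bounded_lipschitz_jacobian_satisfies_condH {n : ℕ} (V : Vec n → Vec n)
    (hC1 : ContDiff ℝ 1 V)
    (hLip : ∃ L : NNReal, LipschitzWith L V)
    (hBdd : ∃ M : ℝ, ∀ x, ‖V x‖ ≤ M)
    (hJac : ∃ L' : NNReal, LipschitzWith L' (fun x => fderiv ℝ V x)) :
    CondH V := by
  obtain ⟨L, hL⟩ := hLip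
  obtain ⟨M, hM⟩ := hBdd
  obtain ⟨L', hJ⟩ := hJac
  have hM0 : 0 ≤ M := le_trans (norm_nonneg (V 0)) (hM 0)
  refine ⟨(L : ℝ) * L + (L' : ℝ) * M + 1, by positivity, ?_⟩
  intro θ x y z w
  have hA : ‖(V (x + θ • V z) - V x) - (V (y + θ • V z) - V y)‖ ≤
      (L' : ℝ) * (|θ| * M) * ‖x - y‖ := by
    have := key_increment V hC1 L' hJ (θ • V z) x y
    have hn : ‖θ • V z‖ ≤ |θ| * M := by
      rw [norm_smul, Real.norm_eq_abs]
      exact mul_le_mul_of_nonneg_left (hM z) (abs_nonneg θ)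
    calc ‖(V (x + θ • V z) - V x) - (V (y + θ • V z) - V y)‖
        ≤ (L' : ℝ) * ‖θ • V z‖ * ‖x - y‖ := this
      _ ≤ (L' : ℝ) * (|θ| * M) * ‖x - y‖ := by
          gcongr
  have hB : ‖V (y + θ • V z) - V (y + θ • V w)‖ ≤ (L : ℝ) * (|θ| * ((L : ℝ) * ‖z - w‖)) := by
    have h1 := hL.dist_le_mul (y + θ • V z) (y + θ • V w)
    have h2 : dist (y + θ • V z) (y + θ • V w) = |θ| * dist (V z) (V w) := by
      rw [dist_eq_norm, dist_eq_norm]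
      have : (y + θ • V z) - (y + θ • V w) = θ • (V z - V w) := by
        rw [smul_sub]; abel
      rw [this, norm_smul, Real.norm_eq_abs]
    have h3 : dist (V z) (V w) ≤ (L : ℝ) * ‖z - w‖ := by
      have := hL.dist_le_mul z w
      rwa [dist_eq_norm] at this
    rw [dist_eq_norm] at h1
    calc ‖V (y + θ • V z) - V (y + θ • V w)‖ ≤ (L : ℝ) * (|θ| * dist (V z) (V w)) := by
          rw [← h2]; exact h1
      _ ≤ (L : ℝ) * (|θ| * ((L : ℝ) * ‖z - w‖)) := by gcongr
  have hsplit : V (x + θ • V z) + V y - V x - V (y + θ • V w) =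
      ((V (x + θ • V z) - V x) - (V (y + θ • V z) - V y)) +
      (V (y + θ • V z) - V (y + θ • V w)) := by abel
  rw [hsplit]
  have htri := norm_add_le ((V (x + θ • V z) - V x) - (V (y + θ • V z) - V y))
    (V (y + θ • V z) - V (y + θ • V w))
  have habs : (0:ℝ) ≤ |θ| := abs_nonneg θ
  have hxy : (0:ℝ) ≤ ‖x - y‖ := norm_nonneg _
  have hzw : (0:ℝ) ≤ ‖z - w‖ := norm_nonneg _
  have hL0 : (0:ℝ) ≤ L := L.coe_nonneg
  have hL'0 : (0:ℝ) ≤ L' := L'.coe_nonneg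
  have h1 : (0:ℝ) ≤ (L : ℝ) * L := mul_nonneg hL0 hL0
  have h2 : (0:ℝ) ≤ (L' : ℝ) * M := mul_nonneg hL'0 hM0
  nlinarith [mul_nonneg (mul_nonneg h1 habs) hxy, mul_nonneg (mul_nonneg h2 habs) hzw,
    mul_nonneg (mul_nonneg h1 (mul_nonneg habs habs)) hzw,
    mul_nonneg (mul_nonneg h2 (mul_nonneg habs habs)) hzw,
    mul_nonneg (mul_nonneg habs habs) hzw, mul_nonneg habs hxy, mul_nonneg habs hzw]
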